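/- Let 0 < H₁ ≤ H_e < H₂, let A₁, A₂ ≥ 1, α > 0, P_c ≥ 0, and let P_max ≥ (A₁ − 1)/H₁ + A₁·(A₂ − 1)/H₂. Define the feasible set Π = {(p₁, p₂) ∈ ℝ₊² : p₁ + p₂ ≤ P_max, p₁ ≥ (A₁ − 1)·(p₂ + 1/H₁), p₂ ≥ (A₂ − 1)/H₂} and the objective Ψ(p₁, p₂) = (1/2)·log₂((1 + H₂·p₂)/(1 + H_e·p₂)) − α·(p₁ + p₂ + P_c). Then every maximizer (p₁*, p₂*) of Ψ over Π satisfies the weak user's quality-of-service constraint with equality: p₁* = (A₁ − 1)·(p₂* + 1/H₁). -/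
import Mathlib

/-- In the two-user system with ordered gains H₁ ≤ H_e < H₂, every
maximizer of the SEE objective Ψ over the feasible set Π makes the weak user's QoS
constraint tight: p₁* = (A₁ − 1)·(p₂* + 1/H₁). -/
theorem maximizer_has_tight_weak_user_qos (H1 He H2 A1 A2 α Pc Pmax : ℝ)
    (hH1 : 0 < H1) (h1e : H1 ≤ He) (he2 : He < H2)
    (hA1 : 1 ≤ A1) (hA2 : 1 ≤ A2) (hα : 0 < α) (hPc : 0 ≤ Pc)
    (hPmax : (A1 - 1) / H1 + A1 * (A2 - 1) / H2 ≤ Pmax) :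
    ∀ p : ℝ × ℝ,
      (0 ≤ p.1 ∧ 0 ≤ p.2 ∧ p.1 + p.2 ≤ Pmax ∧
        p.1 ≥ (A1 - 1) * (p.2 + 1 / H1) ∧ p.2 ≥ (A2 - 1) / H2) →
      (∀ q : ℝ × ℝ,
        (0 ≤ q.1 ∧ 0 ≤ q.2 ∧ q.1 + q.2 ≤ Pmax ∧
          q.1 ≥ (A1 - 1) * (q.2 + 1 / H1) ∧ q.2 ≥ (A2 - 1) / H2) →
        (1/2) * Real.logb 2 ((1 + H2 * q.2) / (1 + He * q.2)) - α * (q.1 + q.2 + Pc) ≤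
        (1/2) * Real.logb 2 ((1 + H2 * p.2) / (1 + He * p.2)) - α * (p.1 + p.2 + Pc)) →
      p.1 = (A1 - 1) * (p.2 + 1 / H1) := by
  intro p hp hmax
  obtain ⟨h1, h2, h3, h4, h5⟩ := hp
  by_contra hne
  have hlt : (A1 - 1) * (p.2 + 1 / H1) < p.1 := lt_of_le_of_ne h4 (Ne.symm hne)
  have hq1 : 0 ≤ (A1 - 1) * (p.2 + 1 / H1) := by
    apply mul_nonneg (by linarith)
    positivity
  have := hmax ((A1 - 1) * (p.2 + 1 / H1), p.2)
    ⟨hq1, h2, by dsimp; linarith, le_refl _, h5⟩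
  dsimp at this
  nlinarith
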